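/- Let k₁,k₂>0, J_1(z)=k₁/z¹²−k₂/z⁶ for z>0 and +∞ for z≤0, J_2(z):=J_1(2z), J_CB:=J_1+J_2, and γ:=(2k₁/k₂)^{1/6}·((1+2^{-12})/(1+2^{-6}))^{1/6}. Define F(a,b):=J_2(γ+(a+b)/2)+(1/2)J_1(γ+a)+(1/2)J_1(γ+b)−J_CB(γ) (which is ≥0) and, for a real sequence r=(r_i)_{i≥1}, B_γ(r):=(1/2)J_1(γ+r_1)+Σ_{i=1}^∞ F(r_i,r_{i+1}) ∈ ℝ∪{+∞}. Then inf{B_γ(r) : r_i=0 for all sufficiently large i} = inf{B_γ(r) : r is a real sequence with r_i→0 as i→∞}. -/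

import Mathlib

open Filter Finset Set

noncomputable section

/-- The Lennard-Jones potential `J₁`, extended by `+∞` on `(-∞,0]`. -/
def LJ1 (k₁ k₂ : ℝ) (z : ℝ) : EReal :=
  if 0 < z then ((k₁ / z ^ 12 - k₂ / z ^ 6 : ℝ) : EReal) else ⊤

/-- The real-valued Lennard-Jones formula. -/
def LJ1r (k₁ k₂ : ℝ) (z : ℝ) : ℝ := k₁ / z ^ 12 - k₂ / z ^ 6

/-- The next-to-nearest neighbour potential `J₂(z) = J₁(2z)`. -/
def LJ2 (k₁ k₂ : ℝ) (z : ℝ) : EReal := LJ1 k₁ k₂ (2 * z)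

/-- The unique minimizer `γ` of `J_CB = J₁ + J₂` for `K = 2`. -/
def gammaNNN (k₁ k₂ : ℝ) : ℝ :=
  (2 * k₁ / k₂) ^ ((1 : ℝ) / 6) *
    ((1 + (2 : ℝ) ^ (-12 : ℤ)) / (1 + (2 : ℝ) ^ (-6 : ℤ))) ^ ((1 : ℝ) / 6)

/-- `J_CB(γ) = J₁(γ) + J₂(γ)` (a real number). -/
def JCBGammaNNN (k₁ k₂ : ℝ) : ℝ :=
  LJ1r k₁ k₂ (gammaNNN k₁ k₂) + LJ1r k₁ k₂ (2 * gammaNNN k₁ k₂)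

/-- `F(a,b) = J₂(γ+(a+b)/2) + ½J₁(γ+a) + ½J₁(γ+b) - J_CB(γ)`. -/
def Fcell (k₁ k₂ : ℝ) (a b : ℝ) : EReal :=
  LJ2 k₁ k₂ (gammaNNN k₁ k₂ + (a + b) / 2) +
    (((1 : ℝ) / 2 : ℝ) : EReal) * LJ1 k₁ k₂ (gammaNNN k₁ k₂ + a) +
    (((1 : ℝ) / 2 : ℝ) : EReal) * LJ1 k₁ k₂ (gammaNNN k₁ k₂ + b) -
    ((JCBGammaNNN k₁ k₂ : ℝ) : EReal)

/-- The boundary-layer functional `B_γ(r) = ½J₁(γ+r₁) + Σ_{i≥1} F(r_i,r_{i+1})`;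
here `r : ℕ → ℝ` with `r i` playing the role of `r_{i+1}`. -/
def Bgam (k₁ k₂ : ℝ) (r : ℕ → ℝ) : EReal :=
  (((1 : ℝ) / 2 : ℝ) : EReal) * LJ1 k₁ k₂ (gammaNNN k₁ k₂ + r 0) +
    ∑' i : ℕ, Fcell k₁ k₂ (r i) (r (i + 1))

/-! ### Auxiliary algebraic lemmas -/

theorem quad_ineq (k₁ k₂ : ℝ) (hk₁ : 0 < k₁) (hk₂ : 0 < k₂)
    (u v w m : ℝ) (hu : 0 < u) (hv : 0 < v) (hw : 0 < w) (hm : 0 < m)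
    (hm2 : m ^ 2 = u * v) (hwm : w ≤ m / 64) :
    0 ≤ (k₁ * w ^ 2 - k₂ * w) + (1 / 2) * (k₁ * u ^ 2 - k₂ * u)
      + (1 / 2) * (k₁ * v ^ 2 - k₂ * v) + (k₂ * (65 / 64)) ^ 2 / (4 * (k₁ * (4097 / 4096))) := by
  have hA4 : (0:ℝ) < 4 * (k₁ * (4097 / 4096)) := by linarith
  have hs : 2 * m ≤ u + v := by nlinarith [sq_nonneg (u - v)]
  have hG : 0 ≤ 4 * (k₁ * (4097/4096)) *
      ((k₁ * w ^ 2 - k₂ * w) + (1 / 2) * (k₁ * u ^ 2 - k₂ * u)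
        + (1 / 2) * (k₁ * v ^ 2 - k₂ * v)) + (k₂ * (65 / 64)) ^ 2 := by
    rcases le_or_gt (k₁ * (w + m / 64)) k₂ with hcase | hcase
    · have h1 : 0 ≤ (m / 64 - w) * (k₂ - k₁ * (w + m / 64)) :=
        mul_nonneg (by linarith) (by linarith)
      have h2 : 0 ≤ ((u + v) / 2 - m) * (k₂ / 64 + k₁ * (4095 / 4096) * (m + (u + v) / 2)) := by
        have hpos : 0 < k₂ / 64 + k₁ * (4095 / 4096) * (m + (u + v) / 2) := by
          have : 0 < k₁ * (m + (u + v) / 2) := mul_pos hk₁ (by linarith)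
          nlinarith
        exact mul_nonneg (by linarith) hpos.le
      have hm2' : k₁ ^ 2 * m ^ 2 = k₁ ^ 2 * (u * v) := by rw [hm2]
      have h4A : (0:ℝ) ≤ 4 * (k₁ * (4097 / 4096)) := hA4.le
      nlinarith [mul_nonneg h4A h1, mul_nonneg h4A h2,
        sq_nonneg (k₁ * (4097/4096) * (u + v) - k₂ * (65/64)), hm2']
    · have hm32 : 32 * k₂ < k₁ * m := by nlinarith
      have h1024 : 1024 * k₂ ^ 2 ≤ k₁ ^ 2 * m ^ 2 := by nlinarith
      have hf1 : 0 ≤ k₁ * (2 * k₁ * w - k₂) ^ 2 := mul_nonneg hk₁.le (sq_nonneg _)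
      have hh2 : 0 ≤ k₁ * (k₁ * u - k₂) ^ 2 := mul_nonneg hk₁.le (sq_nonneg _)
      have hh3 : 0 ≤ k₁ * (k₁ * v - k₂) ^ 2 := mul_nonneg hk₁.le (sq_nonneg _)
      have hf5 : 0 ≤ k₁ ^ 3 * (u - v) ^ 2 := by positivity
      have hf4 : 0 ≤ k₁ * (k₁ ^ 2 * m ^ 2 - 1024 * k₂ ^ 2) :=
        mul_nonneg hk₁.le (by linarith)
      have hm3 : k₁ ^ 3 * m ^ 2 = k₁ ^ 3 * (u * v) := by rw [hm2]
      have hkk : (0:ℝ) ≤ k₁ * k₂ ^ 2 := by positivity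
      have hGk : 0 ≤ k₁ * (4 * (k₁ * (4097/4096)) *
          ((k₁ * w ^ 2 - k₂ * w) + (1 / 2) * (k₁ * u ^ 2 - k₂ * u)
            + (1 / 2) * (k₁ * v ^ 2 - k₂ * v)) + (k₂ * (65 / 64)) ^ 2) := by
        nlinarith [hf1, hh2, hh3, hf5, hf4, hm3, hkk]
      exact (mul_le_mul_iff_right₀ hk₁).mp (by simpa using hGk)
  have key := div_nonneg hG hA4.le
  rwa [add_div, mul_div_cancel_left₀ _ hA4.ne'] at key

theorem gammaNNN_pos {k₁ k₂ : ℝ} (hk₁ : 0 < k₁) (hk₂ : 0 < k₂) : 0 < gammaNNN k₁ k₂ := by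
  have h1 : (0:ℝ) < 2 * k₁ / k₂ := by positivity
  have h2 : (0:ℝ) < (1 + (2 : ℝ) ^ (-12 : ℤ)) / (1 + (2 : ℝ) ^ (-6 : ℤ)) := by positivity
  exact mul_pos (Real.rpow_pos_of_pos h1 _) (Real.rpow_pos_of_pos h2 _)

theorem gammaNNN_pow6 {k₁ k₂ : ℝ} (hk₁ : 0 < k₁) (hk₂ : 0 < k₂) :
    gammaNNN k₁ k₂ ^ 6 = k₁ / k₂ * (4097 / 2080) := by
  have h1 : (0:ℝ) ≤ 2 * k₁ / k₂ := by positivity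
  have h2 : (0:ℝ) ≤ (1 + (2 : ℝ) ^ (-12 : ℤ)) / (1 + (2 : ℝ) ^ (-6 : ℤ)) := by positivity
  rw [gammaNNN, mul_pow, ← Real.rpow_natCast ((2 * k₁ / k₂) ^ ((1:ℝ)/6)) 6,
    ← Real.rpow_natCast (((1 + (2 : ℝ) ^ (-12 : ℤ)) / (1 + (2 : ℝ) ^ (-6 : ℤ))) ^ ((1:ℝ)/6)) 6,
    ← Real.rpow_mul h1, ← Real.rpow_mul h2]
  norm_num
  ring

theorem JCB_val {k₁ k₂ : ℝ} (hk₁ : 0 < k₁) (hk₂ : 0 < k₂) :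
    JCBGammaNNN k₁ k₂ = -((k₂ * (65 / 64)) ^ 2 / (4 * (k₁ * (4097 / 4096)))) := by
  have hγ : 0 < gammaNNN k₁ k₂ := gammaNNN_pos hk₁ hk₂
  have h6 : gammaNNN k₁ k₂ ^ 6 = k₁ / k₂ * (4097 / 2080) := gammaNNN_pow6 hk₁ hk₂
  have h12 : gammaNNN k₁ k₂ ^ 12 = (k₁ / k₂ * (4097 / 2080)) ^ 2 := by
    rw [show (12:ℕ) = 6*2 by norm_num, pow_mul, h6]
  have h6' : (2 * gammaNNN k₁ k₂) ^ 6 = 64 * (k₁ / k₂ * (4097 / 2080)) := by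
    rw [mul_pow, h6]; norm_num
  have h12' : (2 * gammaNNN k₁ k₂) ^ 12 = 4096 * (k₁ / k₂ * (4097 / 2080)) ^ 2 := by
    rw [mul_pow, h12]; norm_num
  rw [JCBGammaNNN, LJ1r, LJ1r, h6, h12, h6', h12']
  field_simp
  ring

theorem key_ineq {k₁ k₂ : ℝ} (hk₁ : 0 < k₁) (hk₂ : 0 < k₂) (x y : ℝ)
    (hx : 0 < x) (hy : 0 < y) :
    JCBGammaNNN k₁ k₂ ≤ LJ1r k₁ k₂ (x + y) + (1/2) * LJ1r k₁ k₂ x + (1/2) * LJ1r k₁ k₂ y := by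
  have hxy : 0 < x + y := by linarith
  have hm2 : ((x^3*y^3)⁻¹) ^ 2 = (x^6)⁻¹ * (y^6)⁻¹ := by
    field_simp
  have h2 : 4*(x*y) ≤ (x+y)^2 := by nlinarith [sq_nonneg (x-y)]
  have h6 : 64*(x^3*y^3) ≤ (x+y)^6 := by
    calc 64*(x^3*y^3) = (4*(x*y))^3 := by ring
    _ ≤ ((x+y)^2)^3 := pow_le_pow_left₀ (by positivity) h2 3
    _ = (x+y)^6 := by ring
  have hwm : ((x+y)^6)⁻¹ ≤ (x^3*y^3)⁻¹/64 := by
    have h := inv_anti₀ (by positivity) h6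
    rw [mul_inv] at h
    calc ((x+y)^6)⁻¹ ≤ (64:ℝ)⁻¹ * (x^3*y^3)⁻¹ := h
    _ = (x^3*y^3)⁻¹/64 := by ring
  have hq := quad_ineq k₁ k₂ hk₁ hk₂ ((x^6)⁻¹) ((y^6)⁻¹) (((x+y)^6)⁻¹) ((x^3*y^3)⁻¹)
    (by positivity) (by positivity) (by positivity) (by positivity) hm2 hwm
  have hLx : LJ1r k₁ k₂ x = k₁*((x^6)⁻¹)^2 - k₂*(x^6)⁻¹ := by
    rw [LJ1r]; field_simp
  have hLy : LJ1r k₁ k₂ y = k₁*((y^6)⁻¹)^2 - k₂*(y^6)⁻¹ := by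
    rw [LJ1r]; field_simp
  have hLxy : LJ1r k₁ k₂ (x+y) = k₁*(((x+y)^6)⁻¹)^2 - k₂*((x+y)^6)⁻¹ := by
    rw [LJ1r]; field_simp
  rw [JCB_val hk₁ hk₂, hLx, hLy, hLxy]
  linarith [hq]

/-! ### EReal lemmas -/

theorem LJ1_of_pos (k₁ k₂ : ℝ) {z : ℝ} (hz : 0 < z) :
    LJ1 k₁ k₂ z = ((LJ1r k₁ k₂ z : ℝ) : EReal) := if_pos hz

theorem LJ1_ne_bot (k₁ k₂ z : ℝ) : LJ1 k₁ k₂ z ≠ ⊥ := by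
  rw [LJ1]; split
  · exact EReal.coe_ne_bot _
  · exact top_ne_bot

theorem LJ2_ne_bot (k₁ k₂ z : ℝ) : LJ2 k₁ k₂ z ≠ ⊥ := LJ1_ne_bot _ _ _

theorem half_LJ1_ne_bot (k₁ k₂ z : ℝ) :
    (((1 : ℝ) / 2 : ℝ) : EReal) * LJ1 k₁ k₂ z ≠ ⊥ := by
  rw [LJ1]; split
  · rw [← EReal.coe_mul]; exact EReal.coe_ne_bot _
  · rw [EReal.coe_mul_top_of_pos (by norm_num)]; exact top_ne_bot

theorem half_LJ1_of_neg (k₁ k₂ : ℝ) {z : ℝ} (hz : ¬ 0 < z) :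
    (((1 : ℝ) / 2 : ℝ) : EReal) * LJ1 k₁ k₂ z = ⊤ := by
  rw [LJ1, if_neg hz, EReal.coe_mul_top_of_pos (by norm_num)]

theorem Fcell_nonneg {k₁ k₂ : ℝ} (hk₁ : 0 < k₁) (hk₂ : 0 < k₂) (a b : ℝ) :
    0 ≤ Fcell k₁ k₂ a b := by
  set γ := gammaNNN k₁ k₂ with hγdef
  by_cases ha : 0 < γ + a
  · by_cases hb : 0 < γ + b
    · have hab : 0 < 2 * (γ + (a + b) / 2) := by linarith
      rw [Fcell, LJ2, LJ1_of_pos _ _ hab, LJ1_of_pos _ _ ha, LJ1_of_pos _ _ hb,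
        ← EReal.coe_mul, ← EReal.coe_mul, ← EReal.coe_add, ← EReal.coe_add, ← EReal.coe_sub]
      rw [show (0 : EReal) = ((0:ℝ) : EReal) from rfl, EReal.coe_le_coe_iff]
      have hk := key_ineq hk₁ hk₂ (γ + a) (γ + b) ha hb
      rw [show (γ + a) + (γ + b) = 2 * (γ + (a + b) / 2) by ring] at hk
      linarith
    · have hnb : LJ2 k₁ k₂ (gammaNNN k₁ k₂ + (a + b) / 2) +
          (((1 : ℝ) / 2 : ℝ) : EReal) * LJ1 k₁ k₂ (gammaNNN k₁ k₂ + a) ≠ ⊥ := by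
        rw [Ne, EReal.add_eq_bot_iff]
        push_neg
        exact ⟨LJ2_ne_bot _ _ _, half_LJ1_ne_bot _ _ _⟩
      rw [Fcell, half_LJ1_of_neg _ _ hb, EReal.add_top_of_ne_bot hnb, EReal.top_sub_coe]
      exact le_top
  · rw [Fcell, half_LJ1_of_neg _ _ ha, EReal.add_top_of_ne_bot (LJ2_ne_bot _ _ _),
      EReal.top_add_of_ne_bot (half_LJ1_ne_bot _ _ _), EReal.top_sub_coe]
    exact le_top

theorem Fcell_zero {k₁ k₂ : ℝ} (hk₁ : 0 < k₁) (hk₂ : 0 < k₂) :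
    Fcell k₁ k₂ 0 0 = 0 := by
  have hγ : 0 < gammaNNN k₁ k₂ := gammaNNN_pos hk₁ hk₂
  rw [Fcell, LJ2]
  rw [show gammaNNN k₁ k₂ + ((0:ℝ) + 0) / 2 = gammaNNN k₁ k₂ by ring,
    show gammaNNN k₁ k₂ + (0:ℝ) = gammaNNN k₁ k₂ by ring]
  rw [LJ1_of_pos _ _ (by linarith : (0:ℝ) < 2 * gammaNNN k₁ k₂), LJ1_of_pos _ _ hγ,
    ← EReal.coe_mul, ← EReal.coe_add, ← EReal.coe_add, ← EReal.coe_sub]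
  rw [show (0 : EReal) = ((0:ℝ) : EReal) from rfl, EReal.coe_eq_coe_iff]
  rw [JCBGammaNNN]
  ring

theorem Fcell_small {k₁ k₂ : ℝ} (hk₁ : 0 < k₁) (hk₂ : 0 < k₂) {ε : ℝ} (hε : 0 < ε) :
    ∃ δ > 0, ∀ a : ℝ, |a| < δ → Fcell k₁ k₂ a 0 ≤ (ε : EReal) := by
  have hγ : 0 < gammaNNN k₁ k₂ := gammaNNN_pos hk₁ hk₂
  set γ := gammaNNN k₁ k₂ with hγdef
  set g : ℝ → ℝ := fun a => LJ1r k₁ k₂ (2 * γ + a) + (1/2) * LJ1r k₁ k₂ (γ + a) +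
    ((1/2) * LJ1r k₁ k₂ γ - JCBGammaNNN k₁ k₂) with hg
  have c0 : ∀ c : ℝ, 0 < c → ContinuousAt (fun a : ℝ => LJ1r k₁ k₂ (c + a)) 0 := by
    intro c hc
    have h1 : ((c + (0:ℝ)) ^ 12) ≠ 0 := pow_ne_zero _ (by linarith)
    have h2 : ((c + (0:ℝ)) ^ 6) ≠ 0 := pow_ne_zero _ (by linarith)
    unfold LJ1r
    have hp12 : ContinuousAt (fun a : ℝ => (c + a) ^ 12) 0 := by fun_prop
    have hp6 : ContinuousAt (fun a : ℝ => (c + a) ^ 6) 0 := by fun_prop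
    exact (continuousAt_const.div hp12 h1).sub (continuousAt_const.div hp6 h2)
  have hcont : ContinuousAt g 0 := by
    exact ((c0 (2*γ) (by linarith)).add ((c0 γ hγ).const_mul (1/2))).add continuousAt_const
  have hg0 : g 0 = 0 := by
    simp only [hg, add_zero, JCBGammaNNN, ← hγdef]
    ring
  rw [Metric.continuousAt_iff] at hcont
  obtain ⟨δ₀, hδ₀pos, hδ₀⟩ := hcont ε hε
  refine ⟨min δ₀ γ, lt_min hδ₀pos hγ, ?_⟩
  intro a ha
  have ha1 : |a| < δ₀ := lt_of_lt_of_le ha (min_le_left _ _)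
  have ha2 : |a| < γ := lt_of_lt_of_le ha (min_le_right _ _)
  have haγ : -γ < a := by have := (abs_lt.mp ha2).1; linarith
  have hga : |g a - g 0| < ε := by
    have : dist a 0 < δ₀ := by rw [Real.dist_eq, sub_zero]; exact ha1
    have := hδ₀ this
    rwa [Real.dist_eq] at this
  rw [hg0, sub_zero, abs_lt] at hga
  have hpos1 : 0 < 2 * (γ + (a + 0) / 2) := by linarith
  have hpos2 : 0 < γ + a := by linarith
  have hpos3 : 0 < γ + (0:ℝ) := by linarith
  rw [Fcell, LJ2, ← hγdef, LJ1_of_pos _ _ hpos1, LJ1_of_pos _ _ hpos2, LJ1_of_pos _ _ hpos3,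
    ← EReal.coe_mul, ← EReal.coe_mul, ← EReal.coe_add, ← EReal.coe_add, ← EReal.coe_sub,
    EReal.coe_le_coe_iff]
  have harg : 2 * (γ + (a + 0) / 2) = 2 * γ + a := by ring
  have harg2 : γ + (0:ℝ) = γ := add_zero _
  rw [harg, harg2]
  have := hga.2
  rw [hg] at this
  simp only at this
  linarith [this]

theorem ereal_summable {f : ℕ → EReal} (hf : ∀ i, 0 ≤ f i) : Summable f :=
  ⟨_, tendsto_atTop_iSup fun _ _ hst => Finset.sum_le_sum_of_subset_of_nonneg hst
    fun i _ _ => hf i⟩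

theorem ereal_le_coe_of_forall {c : EReal} {x : ℝ}
    (h : ∀ ε : ℝ, 0 < ε → c ≤ ((x + ε : ℝ) : EReal)) : c ≤ (x : EReal) := by
  induction c using EReal.rec with
  | bot => exact bot_le
  | coe c =>
      rw [EReal.coe_le_coe_iff]
      by_contra hc
      push_neg at hc
      have := h ((c - x)/2) (by linarith)
      rw [EReal.coe_le_coe_iff] at this
      linarith
  | top => exact absurd (h 1 one_pos) (not_le.mpr (EReal.coe_lt_top _))

/-- the infimum of `B_γ` over sequences which vanish eventually equals its
infimum over sequences tending to `0`. -/
theorem boundary_layer_inf_eq (k₁ k₂ : ℝ) (hk₁ : 0 < k₁) (hk₂ : 0 < k₂) :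
    sInf {y : EReal | ∃ r : ℕ → ℝ, (∃ N : ℕ, ∀ i ≥ N, r i = 0) ∧ y = Bgam k₁ k₂ r} =
      sInf {y : EReal | ∃ r : ℕ → ℝ,
        Filter.Tendsto r Filter.atTop (nhds 0) ∧ y = Bgam k₁ k₂ r} := by
  apply le_antisymm
  · apply le_sInf
    rintro y ⟨r, hr, rfl⟩
    by_cases htop : Bgam k₁ k₂ r = ⊤
    · exact htop ▸ le_top
    have hSnn : ∀ i, (0:EReal) ≤ Fcell k₁ k₂ (r i) (r (i+1)) :=
      fun i => Fcell_nonneg hk₁ hk₂ _ _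
    have hsummable : Summable (fun i => Fcell k₁ k₂ (r i) (r (i+1))) := ereal_summable hSnn
    have hne : Bgam k₁ k₂ r ≠ ⊥ := by
      rw [Bgam, Ne, EReal.add_eq_bot_iff]
      push_neg
      refine ⟨half_LJ1_ne_bot _ _ _, ?_⟩
      intro h
      have h0 := tsum_nonneg (L := SummationFilter.unconditional ℕ) hSnn
      rw [h] at h0
      exact absurd h0 (by simp)
    obtain ⟨x, hx⟩ : ∃ x : ℝ, Bgam k₁ k₂ r = (x : EReal) :=
      ⟨(Bgam k₁ k₂ r).toReal, (EReal.coe_toReal htop hne).symm⟩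
    rw [hx]
    apply ereal_le_coe_of_forall
    intro ε hε
    obtain ⟨δ, hδpos, hδ⟩ := Fcell_small hk₁ hk₂ hε
    obtain ⟨M, hM⟩ : ∃ N, ∀ n ≥ N, |r n| < δ := by
      have := Metric.tendsto_atTop.mp hr δ hδpos
      simpa [Real.dist_eq] using this
    set t : ℕ → ℝ := fun i => if i < M + 1 then r i else 0 with ht
    have htmem : ∀ i ≥ M + 1, t i = 0 := fun i hi => if_neg (by omega)
    have ht0 : t 0 = r 0 := if_pos (by omega)
    have hFt0 : ∀ i ∉ range (M+1), Fcell k₁ k₂ (t i) (t (i+1)) = 0 := by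
      intro i hi
      rw [Finset.mem_range, not_lt] at hi
      rw [htmem i (by omega), htmem (i+1) (by omega)]
      exact Fcell_zero hk₁ hk₂
    have htsum : ∑' i, Fcell k₁ k₂ (t i) (t (i+1))
        = ∑ i ∈ range (M+1), Fcell k₁ k₂ (t i) (t (i+1)) := tsum_eq_sum hFt0
    have hsplit : ∑ i ∈ range (M+1), Fcell k₁ k₂ (t i) (t (i+1))
        = ∑ i ∈ range M, Fcell k₁ k₂ (r i) (r (i+1)) + Fcell k₁ k₂ (r M) 0 := by
      rw [Finset.sum_range_succ]
      congr 1
      · refine Finset.sum_congr rfl fun i hi => ?_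
        rw [Finset.mem_range] at hi
        rw [show t i = r i from if_pos (by omega), show t (i+1) = r (i+1) from if_pos (by omega)]
      · rw [show t M = r M from if_pos (by omega), htmem (M+1) le_rfl]
    have hle1 : ∑ i ∈ range M, Fcell k₁ k₂ (r i) (r (i+1))
        ≤ ∑' i, Fcell k₁ k₂ (r i) (r (i+1)) :=
      Summable.sum_le_tsum _ (fun i _ => hSnn i) hsummable
    have hle2 : Fcell k₁ k₂ (r M) 0 ≤ (ε : EReal) := hδ _ (hM M le_rfl)
    have hchain : Bgam k₁ k₂ t ≤ ((x + ε : ℝ) : EReal) := by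
      rw [Bgam, ht0, htsum, hsplit]
      calc (((1 : ℝ) / 2 : ℝ) : EReal) * LJ1 k₁ k₂ (gammaNNN k₁ k₂ + r 0) +
            (∑ i ∈ range M, Fcell k₁ k₂ (r i) (r (i+1)) + Fcell k₁ k₂ (r M) 0)
          ≤ (((1 : ℝ) / 2 : ℝ) : EReal) * LJ1 k₁ k₂ (gammaNNN k₁ k₂ + r 0) +
            ((∑' i, Fcell k₁ k₂ (r i) (r (i+1))) + (ε : EReal)) :=
            add_le_add le_rfl (add_le_add hle1 hle2)
        _ = Bgam k₁ k₂ r + (ε : EReal) := by rw [Bgam, add_assoc]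
        _ = ((x + ε : ℝ) : EReal) := by rw [hx, EReal.coe_add]
    refine le_trans (sInf_le ?_) hchain
    exact ⟨t, ⟨M+1, htmem⟩, rfl⟩
  · apply sInf_le_sInf
    rintro y ⟨r, ⟨N, hN⟩, rfl⟩
    refine ⟨r, ?_, rfl⟩
    have hev : (fun _ : ℕ => (0:ℝ)) =ᶠ[atTop] r :=
      eventually_atTop.mpr ⟨N, fun i hi => (hN i hi).symm⟩
    exact tendsto_const_nhds.congr' hev
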